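/- Characterization of super-distinct partitions: for a partition P with frequency sequence f, the following are equivalent: (1) P is super-distinct (parts differ pairwise by at least 2); (2) ℓ(P) = μ₂(P); (3) the Burge code Ω(P) contains no substring bb; (4) f_i = 1 for i ∈ R(f) and f_i = 0 otherwise; (5) ∂f = (f₂, f₃, ...); (6) ∂P = P − 1; (7) Des(P) = P. -/

import Mathlib

open scoped Classical

noncomputable section

/-- `f` is a frequency sequence: `f 0 = 0` and finite support. -/
def IsFreq (f : ℕ → ℕ) : Prop := f 0 = 0 ∧ (Function.support f).Finite

/-- size `|f| = ∑ i·f i`. -/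
def fsize (f : ℕ → ℕ) : ℕ := ∑ᶠ n, n * f n

/-- length `ℓ(f) = ∑ f i`. -/
def flen (f : ℕ → ℕ) : ℕ := ∑ᶠ n, f n

/-- the support `S(f)`. -/
def suppF (f : ℕ → ℕ) : Set ℕ := {i | 1 ≤ i ∧ f i ≠ 0}

/-- `[i,j]` is a spread of `f`: a maximal interval contained in the support. -/
def IsSpread (f : ℕ → ℕ) (i j : ℕ) : Prop :=
  1 ≤ i ∧ i ≤ j ∧ (∀ k, i ≤ k → k ≤ j → f k ≠ 0) ∧ (i = 1 ∨ f (i - 1) = 0) ∧ f (j + 1) = 0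

/-- `L(f)`: every other element of each spread, starting from the left end. -/
def Lset (f : ℕ → ℕ) : Set ℕ :=
  {q | ∃ i j, IsSpread f i j ∧ i ≤ q ∧ q ≤ j ∧ (q - i) % 2 = 0}

/-- `R(f)`: every other element of each spread, starting from the right end. -/
def Rset (f : ℕ → ℕ) : Set ℕ :=
  {q | ∃ i j, IsSpread f i j ∧ i ≤ q ∧ q ≤ j ∧ (j - q) % 2 = 0}

/-- the 2-measure, as the cardinality of `R(f)`. -/
def mu2 (f : ℕ → ℕ) : ℕ := (Rset f).ncard

/-- The Burge demotion operator `∂`. -/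
def dB (f : ℕ → ℕ) : ℕ → ℕ := fun n =>
  if n = 0 then 0
  else f n - (if n ∈ Rset f then 1 else 0) + (if n + 1 ∈ Rset f then 1 else 0)

/-- The promotion operator `α`. -/
def aB (f : ℕ → ℕ) : ℕ → ℕ := fun n =>
  if n = 0 then 0
  else f n - (if n ∈ Lset f then 1 else 0) + (if n - 1 ∈ Lset f then 1 else 0)

/-- the shift `(f₂, f₃, …)`; on partitions this is `P ↦ P - 1`. -/
def tailF (f : ℕ → ℕ) : ℕ → ℕ := fun n => if n = 0 then 0 else f (n + 1)

/-- The operator `β`: `β(f) = (f₁ + 1, α(f₂, f₃, …))`. -/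
def bB (f : ℕ → ℕ) : ℕ → ℕ := fun n =>
  if n = 0 then 0 else if n = 1 then f 1 + 1 else aB (tailF f) (n - 1)

/-- the zero sequence (empty partition). -/
def zeroF : ℕ → ℕ := fun _ => 0

/-- `k` minimal with `∂^[k] f = 0`. -/
def chainK (f : ℕ → ℕ) : ℕ :=
  if h : ∃ m, dB^[m] f = zeroF then Nat.find h else 0

/-- The Burge code of `f`, as a list of letters; `false` = `a`, `true` = `b`.
The `i`-th letter (0-indexed `i`) records whether `∂^[i] f ∈ B`, i.e. `1 ∈ R(∂^[i] f)`. -/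
def burgeCode (f : ℕ → ℕ) : List Bool :=
  (List.range (chainK f + 1)).map fun i => if 1 ∈ Rset (dB^[i] f) then true else false

/-- descent set of a word: 1-indexed positions `i` with `ωᵢ = b`, `ω_{i+1} = a`. -/
def descSet (w : List Bool) : Set ℕ :=
  {i | 1 ≤ i ∧ w[i - 1]? = some true ∧ w[i]? = some false}

/-- the descent set of (the Burge code of) a partition. -/
def DesSet (f : ℕ → ℕ) : Set ℕ := descSet (burgeCode f)

/-- `Des(P)` regarded as a partition, via its frequency sequence. -/
def desFreq (f : ℕ → ℕ) : ℕ → ℕ := fun i => if i ∈ DesSet f then 1 else 0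

/-- the 2-measure as the maximal size of a subset of the support without
consecutive pairs. -/
def twoMeasure (f : ℕ → ℕ) : ℕ :=
  sSup {n | ∃ T : Finset ℕ, (↑T : Set ℕ) ⊆ suppF f ∧ (∀ x ∈ T, x + 1 ∉ T) ∧ T.card = n}

/-- evaluation at `i`: `ν_i(f) = i f_i + (i+1) f_{i+1} + 2 ∑_{j>i+1} f_j`, with `ν₀ = ν₁`. -/
def nuI (f : ℕ → ℕ) (i : ℕ) : ℕ :=
  (max i 1) * f (max i 1) + (max i 1 + 1) * f (max i 1 + 1)
    + 2 * ∑ᶠ j ∈ {j : ℕ | max i 1 + 1 < j}, f j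

/-- annihilation at `i`: `ρ_i(f) = (f₁, …, f_{i-1}, f_{i+2}, f_{i+3}, …)`, with `ρ₀ = ρ₁`. -/
def rhoI (f : ℕ → ℕ) (i : ℕ) : ℕ → ℕ := fun n =>
  if n = 0 then 0 else if n < max i 1 then f n else f (n + 2)

/-- `i ≥ 1` is right admissible in `f`. -/
def RightAdm (f : ℕ → ℕ) (i : ℕ) : Prop :=
  1 ≤ i ∧ 0 < f i ∧ (0 < f (i + 1) ∨ (f (i - 1) = 0 ∧ f (i + 1) = 0))

/-- `i ≥ 0` is left admissible in `f`. -/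
def LeftAdm (f : ℕ → ℕ) (i : ℕ) : Prop :=
  0 < f (i + 1) ∧ (0 < f i ∨ (f i = 0 ∧ f (i + 2) = 0))

/-- `i` is a maximal index for `f`: `ν_i(f)` is nonzero and maximal. -/
def MaxIdx (f : ℕ → ℕ) (i : ℕ) : Prop :=
  nuI f i ≠ 0 ∧ ∀ j, nuI f j ≤ nuI f i

end

section AuxLemmas

open Function

variable {f g : ℕ → ℕ}

/-- Super-distinct (condition (1)). -/
def SDz (f : ℕ → ℕ) : Prop := ∀ i, f i ≤ 1 ∧ (f i = 0 ∨ f (i + 1) = 0)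

lemma mem_Rset_pos {q : ℕ} (h : q ∈ Rset f) : 1 ≤ q ∧ f q ≠ 0 := by
  obtain ⟨i, j, hs, hiq, hqj, _⟩ := h
  exact ⟨le_trans hs.1 hiq, hs.2.2.1 q hiq hqj⟩

lemma zero_not_mem_Rset : 0 ∉ Rset f := fun h => by have := (mem_Rset_pos h).1; omega

lemma spread_right_eq {a b a' b' q : ℕ} (h : IsSpread f a b)
    (h' : IsSpread f a' b') (h1 : a ≤ q) (h2 : q ≤ b) (h3 : a' ≤ q) (h4 : q ≤ b') :
    b = b' := by
  obtain ⟨_, _, hz, _, he⟩ := h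
  obtain ⟨_, _, hz', _, he'⟩ := h'
  rcases lt_trichotomy b b' with hl | hl | hl
  · exact absurd he (hz' (b + 1) (by omega) (by omega))
  · exact hl
  · exact absurd he' (hz (b' + 1) (by omega) (by omega))

lemma freq_bound (hf : IsFreq f) : ∃ N, ∀ m, N ≤ m → f m = 0 := by
  obtain ⟨N, hN⟩ := hf.2.bddAbove
  refine ⟨N + 1, fun m hm => by_contra fun h => ?_⟩
  have := hN (show m ∈ Function.support f from h)
  omega

lemma exists_spread (hf : IsFreq f) {n : ℕ} (h1 : 1 ≤ n) (h2 : f n ≠ 0) :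
    ∃ a b, IsSpread f a b ∧ a ≤ n ∧ n ≤ b := by
  classical
  obtain ⟨N, hN⟩ := freq_bound hf
  have hd : ∃ d, f (n + d) = 0 := ⟨N, hN _ (by omega)⟩
  have hd0 : 0 < Nat.find hd := by
    rcases Nat.eq_zero_or_pos (Nat.find hd) with h0 | h0
    · exact absurd (by simpa [h0] using Nat.find_spec hd) h2
    · exact h0
  have hP0 : f (Nat.findGreatest (fun k => f k = 0) n) = 0 :=
    Nat.findGreatest_spec (P := fun k => f k = 0) (Nat.zero_le n) hf.1
  have ha0n : Nat.findGreatest (fun k => f k = 0) n < n :=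
    lt_of_le_of_ne (Nat.findGreatest_le n) (fun h => h2 (h ▸ hP0))
  refine ⟨Nat.findGreatest (fun k => f k = 0) n + 1, n + Nat.find hd - 1,
    ⟨by omega, by omega, ?_, Or.inr (by simpa using hP0), ?_⟩, by omega, by omega⟩
  · intro k hk1 hk2
    rcases le_or_gt k n with hk | hk
    · exact Nat.findGreatest_is_greatest (P := fun k => f k = 0) (n := n) (by omega) hk
    · have hkk : k = n + (k - n) := by omega
      rw [hkk]
      exact Nat.find_min hd (by omega)
  · have h3 : n + Nat.find hd - 1 + 1 = n + Nat.find hd := by omega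
    rw [h3]
    exact Nat.find_spec hd

lemma mem_Rset_iff_of_spread {a b q : ℕ} (hs : IsSpread f a b) (h1 : a ≤ q) (h2 : q ≤ b) :
    q ∈ Rset f ↔ (b - q) % 2 = 0 := by
  constructor
  · rintro ⟨a', b', hs', h1', h2', hp⟩
    rwa [spread_right_eq hs hs' h1 h2 h1' h2']
  · intro hp
    exact ⟨a, b, hs, h1, h2, hp⟩

lemma spread_singleton (h1 : 1 ≤ n) (h2 : f n ≠ 0) (hl : n = 1 ∨ f (n - 1) = 0)
    (hr : f (n + 1) = 0) : IsSpread f n n :=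
  ⟨h1, le_refl n, fun k hk1 hk2 => by
    have : k = n := by omega
    rwa [this], hl, hr⟩

lemma sd_mem_one (hsd : SDz g) : 1 ∈ Rset g ↔ g 1 ≠ 0 := by
  constructor
  · intro h; exact (mem_Rset_pos h).2
  · intro h
    have h2 : g 2 = 0 := ((hsd 1).2).resolve_left h
    exact ⟨1, 1, spread_singleton le_rfl h (Or.inl rfl) h2, le_rfl, le_rfl, by simp⟩

/-! ### (1) ↔ (4) -/

lemma sd_imp_four (hf : IsFreq f) (hsd : SDz f) :
    ∀ i, (i ∈ Rset f → f i = 1) ∧ (i ∉ Rset f → f i = 0) := by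
  intro i
  constructor
  · intro h
    have h1 := (mem_Rset_pos h).2
    have h2 := (hsd i).1
    omega
  · intro h
    by_contra hne
    apply h
    have hi1 : 1 ≤ i := by
      rcases Nat.eq_zero_or_pos i with h0 | h0
      · exact absurd (h0 ▸ hf.1) hne
      · exact h0
    have hl : i = 1 ∨ f (i - 1) = 0 := by
      rcases Nat.lt_or_ge i 2 with h2 | h2
      · left; omega
      · right
        rcases (hsd (i - 1)).2 with h' | h'
        · exact h'
        · exact absurd (by simpa [show i - 1 + 1 = i by omega] using h') hne
    have hr : f (i + 1) = 0 := ((hsd i).2).resolve_left hne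
    exact ⟨i, i, spread_singleton hi1 hne hl hr, le_rfl, le_rfl, by simp⟩

lemma four_imp_sd (h4 : ∀ i, (i ∈ Rset f → f i = 1) ∧ (i ∉ Rset f → f i = 0)) : SDz f := by
  have hval : ∀ i, f i ≤ 1 := by
    intro i
    by_cases h : i ∈ Rset f
    · rw [(h4 i).1 h]
    · rw [(h4 i).2 h]
      omega
  intro i
  refine ⟨hval i, ?_⟩
  by_contra hc
  push_neg at hc
  obtain ⟨h0, h1⟩ := hc
  have hi : i ∈ Rset f := by
    by_contra h; exact h0 ((h4 i).2 h)
  have hi1 : i + 1 ∈ Rset f := by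
    by_contra h; exact h1 ((h4 (i + 1)).2 h)
  obtain ⟨a, b, hs, ha, hb, hp⟩ := hi
  obtain ⟨a', b', hs', ha', hb', hp'⟩ := hi1
  have hib : i + 1 ≤ b := by
    have := hs.2.2.2.2  -- f (b+1) = 0
    rcases Nat.lt_or_ge i b with h' | h'
    · omega
    · have : i = b := by omega
      subst this
      exact absurd (by assumption) (fun hh => h1 hh)
  have hbb : b = b' := spread_right_eq hs hs' (by omega) hib ha' hb'
  omega

/-! ### (4) ↔ (5) -/

lemma four_imp_five (h4 : ∀ i, (i ∈ Rset f → f i = 1) ∧ (i ∉ Rset f → f i = 0)) :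
    dB f = tailF f := by
  funext n
  rcases Nat.eq_zero_or_pos n with h0 | h0
  · subst h0; rfl
  · show dB f n = tailF f n
    have hn : f n = if n ∈ Rset f then 1 else 0 := by
      by_cases h : n ∈ Rset f
      · simp [h, (h4 n).1 h]
      · simp [h, (h4 n).2 h]
    have hn1 : f (n + 1) = if n + 1 ∈ Rset f then 1 else 0 := by
      by_cases h : n + 1 ∈ Rset f
      · simp [h, (h4 (n + 1)).1 h]
      · simp [h, (h4 (n + 1)).2 h]
    simp only [dB, tailF, if_neg (by omega : ¬ n = 0)]
    rw [hn, hn1]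
    by_cases h : n ∈ Rset f <;> by_cases h' : n + 1 ∈ Rset f <;> simp [h, h']

lemma five_imp_four (hf : IsFreq f) (h5 : dB f = tailF f) :
    ∀ i, (i ∈ Rset f → f i = 1) ∧ (i ∉ Rset f → f i = 0) := by
  classical
  set r : ℕ → ℕ := fun k => if k ∈ Rset f then 1 else 0 with hr
  have hrle : ∀ k, r k ≤ f k := by
    intro k
    by_cases h : k ∈ Rset f
    · have := (mem_Rset_pos h).2
      simp only [hr, if_pos h]
      omega
    · simp [hr, h]
  have hstep : ∀ n, 1 ≤ n → f n - r n = f (n + 1) - r (n + 1) := by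
    intro n hn
    have h := congrFun h5 n
    simp only [dB, tailF, if_neg (by omega : ¬ n = 0)] at h
    have h1 := hrle n
    have h2 := hrle (n + 1)
    simp only [hr] at h1 h2 ⊢
    omega
  obtain ⟨N, hN⟩ := freq_bound hf
  have hconst : ∀ n, 1 ≤ n → f n - r n = 0 := by
    intro n hn
    have hiter : ∀ k, f n - r n = f (n + k) - r (n + k) := by
      intro k
      induction k with
      | zero => rfl
      | succ k ih => rw [ih, ← Nat.add_assoc]; exact hstep (n + k) (by omega)
    have h1 := hiter N
    have h2 := hN (n + N) (by omega)
    have h3 := hrle (n + N)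
    omega
  intro i
  constructor
  · intro h
    have h1 := (mem_Rset_pos h).1
    have h2 := hconst i h1
    have h3 := hrle i
    simp only [hr, if_pos h] at h2 h3
    omega
  · intro h
    rcases Nat.eq_zero_or_pos i with h0 | h0
    · exact h0 ▸ hf.1
    · have h2 := hconst i h0
      simp only [hr, if_neg h] at h2
      omega

end AuxLemmas


section Measure
open Function
variable {f : ℕ → ℕ}

lemma flen_eq_sum (hf : IsFreq f) : flen f = ∑ n ∈ hf.2.toFinset, f n :=
  finsum_eq_sum f hf.2

lemma suppF_eq (hf : IsFreq f) : suppF f = ↑hf.2.toFinset := by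
  ext i
  simp only [suppF, Set.mem_setOf_eq, Set.Finite.coe_toFinset, Function.mem_support]
  constructor
  · rintro ⟨h1, h2⟩; exact h2
  · intro h
    refine ⟨?_, h⟩
    rcases Nat.eq_zero_or_pos i with h0 | h0
    · exact absurd (h0 ▸ hf.1) h
    · exact h0

lemma card_le_flen (hf : IsFreq f) : hf.2.toFinset.card ≤ flen f := by
  rw [flen_eq_sum hf, Finset.card_eq_sum_ones]
  apply Finset.sum_le_sum
  intro i hi
  have : f i ≠ 0 := (hf.2.mem_toFinset).1 hi
  omega

lemma two_iff_sd (hf : IsFreq f) :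
    flen f = twoMeasure f ↔ SDz f := by
  classical
  set S := hf.2.toFinset with hS
  have hmemS : ∀ i, i ∈ S ↔ f i ≠ 0 := fun i => hf.2.mem_toFinset
  set A := {n | ∃ T : Finset ℕ, (↑T : Set ℕ) ⊆ suppF f ∧ (∀ x ∈ T, x + 1 ∉ T) ∧ T.card = n}
    with hA
  have htmA : twoMeasure f = sSup A := rfl
  have hA0 : 0 ∈ A := ⟨∅, by simp⟩
  have hbdd : ∀ n ∈ A, n ≤ S.card := by
    rintro n ⟨T, hT, _, rfl⟩
    apply Finset.card_le_card
    rw [← Finset.coe_subset]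
    rw [suppF_eq hf] at hT
    exact hT
  have hbddA : BddAbove A := ⟨S.card, fun n hn => hbdd n hn⟩
  constructor
  · -- (2) → (1)
    intro h2
    have hmem : sSup A ∈ A := Nat.sSup_mem ⟨0, hA0⟩ hbddA
    obtain ⟨T, hT, hnc, hcard⟩ := hmem
    have htm : twoMeasure f = T.card := by rw [htmA, ← hcard]
    have hTS : T ⊆ S := by
      rw [← Finset.coe_subset]; rw [suppF_eq hf] at hT; exact hT
    have h3 : T.card ≤ S.card := Finset.card_le_card hTS
    have h4 : S.card ≤ flen f := card_le_flen hf
    have h5 : flen f = T.card := by rw [h2, htm]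
    have hTeqS : T = S := Finset.eq_of_subset_of_card_le hTS (by omega)
    have hone : ∀ n ∈ S, f n = 1 := by
      by_contra hc
      push_neg at hc
      obtain ⟨n0, hn0, hn0'⟩ := hc
      have hlt : ∑ n ∈ S, 1 < ∑ n ∈ S, f n := by
        apply Finset.sum_lt_sum
        · intro i hi
          have : f i ≠ 0 := (hmemS i).1 hi
          omega
        · refine ⟨n0, hn0, ?_⟩
          have : f n0 ≠ 0 := (hmemS n0).1 hn0
          omega
      rw [← Finset.card_eq_sum_ones, ← flen_eq_sum hf] at hlt
      omega
    intro i
    constructor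
    · by_cases h : f i = 0
      · omega
      · rw [hone i ((hmemS i).2 h)]
    · by_contra hc
      push_neg at hc
      obtain ⟨hi0, hi1⟩ := hc
      have m1 : i ∈ T := hTeqS ▸ (hmemS i).2 hi0
      have m2 : i + 1 ∈ T := hTeqS ▸ (hmemS (i + 1)).2 hi1
      exact hnc i m1 m2
  · -- (1) → (2)
    intro hsd
    have hone : ∀ n ∈ S, f n = 1 := by
      intro n hn
      have h1 := (hmemS n).1 hn
      have := (hsd n).1
      omega
    have hflen : flen f = S.card := by
      rw [flen_eq_sum hf, Finset.card_eq_sum_ones]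
      exact Finset.sum_congr rfl hone
    have hScard : S.card ∈ A := by
      refine ⟨S, by rw [suppF_eq hf], ?_, rfl⟩
      intro x hx hx1
      have h1 := (hmemS x).1 hx
      have h2 := (hmemS (x + 1)).1 hx1
      rcases (hsd x).2 with h | h
      · exact h1 h
      · exact h2 h
    have h6 : sSup A = S.card := le_antisymm (csSup_le ⟨0, hA0⟩ hbdd) (le_csSup hbddA hScard)
    rw [hflen, htmA, h6]

end Measure


section Burge
open Function
variable {f : ℕ → ℕ}

lemma Rset_zeroF : Rset zeroF = ∅ := by
  ext q
  simp only [Set.mem_empty_iff_false, iff_false]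
  intro h
  exact (mem_Rset_pos h).2 rfl

lemma dB_zeroF : dB zeroF = zeroF := by
  funext n
  simp [dB, zeroF, Rset_zeroF]

lemma zeroF_iff : f = zeroF ↔ ∀ n, f n = 0 :=
  ⟨fun h n => congrFun h n, funext⟩

lemma isFreq_zeroF : IsFreq zeroF := ⟨rfl, by simp [zeroF, Function.support]⟩

lemma dB_ne_zero_cases {n : ℕ} (h : dB f n ≠ 0) : n ≠ 0 ∧ (f n ≠ 0 ∨ f (n + 1) ≠ 0) := by
  by_cases h0 : n = 0
  · exact absurd (by simp [dB, h0]) h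
  · refine ⟨h0, ?_⟩
    by_contra hc
    push_neg at hc
    obtain ⟨h1, h2⟩ := hc
    apply h
    have hr1 : n ∉ Rset f := fun hm => (mem_Rset_pos hm).2 h1
    have hr2 : n + 1 ∉ Rset f := fun hm => (mem_Rset_pos hm).2 h2
    simp [dB, h0, h1, hr1, hr2]

lemma dB_isFreq (hf : IsFreq f) : IsFreq (dB f) := by
  refine ⟨by simp [dB], ?_⟩
  apply Set.Finite.subset (hf.2.union (hf.2.image (· - 1)))
  intro n hn
  obtain ⟨h0, h1⟩ := dB_ne_zero_cases hn
  rcases h1 with h | h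
  · exact Or.inl h
  · exact Or.inr ⟨n + 1, h, by simp⟩

lemma max_mem_Rset (hf : IsFreq f) (hne : f ≠ zeroF) :
    ∃ M, M ∈ Rset f ∧ ∀ m, f m ≠ 0 → m ≤ M := by
  classical
  have hSne : hf.2.toFinset.Nonempty := by
    have hne' : ∃ n, f n ≠ 0 := by
      by_contra hc
      push_neg at hc
      exact hne (funext hc)
    obtain ⟨n, hn⟩ := hne'
    exact ⟨n, hf.2.mem_toFinset.2 hn⟩
  set M := hf.2.toFinset.max' hSne with hM
  have hmax : ∀ m, f m ≠ 0 → m ≤ M := fun m h =>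
    Finset.le_max' _ m (hf.2.mem_toFinset.2 h)
  have hfM : f M ≠ 0 := hf.2.mem_toFinset.1 (Finset.max'_mem _ hSne)
  have hM1 : 1 ≤ M := by
    rcases Nat.eq_zero_or_pos M with h0 | h0
    · exact absurd (h0 ▸ hf.1) hfM
    · exact h0
  obtain ⟨a, b, hs, ha, hb⟩ := exists_spread hf hM1 hfM
  have hbM : b = M := le_antisymm (hmax b (hs.2.2.1 b (le_trans ha hb) le_rfl)) hb
  exact ⟨M, ⟨a, b, hs, ha, hb, by omega⟩, hmax⟩

lemma dB_size_lt {N : ℕ} (hf : IsFreq f) (hN : ∀ m, f m ≠ 0 → m < N) (hne : f ≠ zeroF) :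
    ∑ n ∈ Finset.range N, n * dB f n < ∑ n ∈ Finset.range N, n * f n := by
  classical
  set r : ℕ → ℕ := fun n => if n ∈ Rset f then 1 else 0 with hr
  have hrle : ∀ n, r n ≤ f n := by
    intro n
    by_cases h : n ∈ Rset f
    · have := (mem_Rset_pos h).2
      simp only [hr, if_pos h]
      omega
    · simp [hr, h]
  have h1 : ∑ n ∈ Finset.range N, n * dB f n + ∑ n ∈ Finset.range N, n * r n
      = ∑ n ∈ Finset.range N, n * f n + ∑ n ∈ Finset.range N, n * r (n + 1) := by
    rw [← Finset.sum_add_distrib, ← Finset.sum_add_distrib]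
    apply Finset.sum_congr rfl
    intro n _
    rcases Nat.eq_zero_or_pos n with h0 | h0
    · simp [h0]
    · have hdB : dB f n = f n - r n + r (n + 1) := by
        simp only [dB, hr, if_neg (by omega : ¬ n = 0)]
      rw [hdB, ← Nat.mul_add, ← Nat.mul_add]
      have := hrle n
      congr 1
      omega
  have hrN : r N = 0 := by
    simp only [hr, if_neg (fun hm => absurd (hN N (mem_Rset_pos hm).2) (by omega))]
  have hr0 : r 0 = 0 := by
    simp only [hr, if_neg (zero_not_mem_Rset)]
  have h2 : ∑ n ∈ Finset.range N, n * r (n + 1) = ∑ n ∈ Finset.range N, (n - 1) * r n := by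
    have hs' : ∑ m ∈ Finset.range (N + 1), (m - 1) * r m
        = ∑ n ∈ Finset.range N, (n + 1 - 1) * r (n + 1) + (0 - 1) * r 0 :=
      Finset.sum_range_succ' _ N
    rw [Finset.sum_range_succ] at hs'
    simp only [hrN, hr0, Nat.mul_zero, Nat.add_zero, Nat.zero_sub, Nat.zero_mul] at hs'
    simp only [Nat.add_sub_cancel] at hs'
    omega
  have h3 : ∑ n ∈ Finset.range N, (n - 1) * r n + ∑ n ∈ Finset.range N, r n
      = ∑ n ∈ Finset.range N, n * r n := by
    rw [← Finset.sum_add_distrib]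
    apply Finset.sum_congr rfl
    intro n _
    by_cases h : n ∈ Rset f
    · have h1n := (mem_Rset_pos h).1
      simp only [hr, if_pos h, Nat.mul_one]
      omega
    · simp [hr, h]
  have h4 : 1 ≤ ∑ n ∈ Finset.range N, r n := by
    obtain ⟨M, hM, hMmax⟩ := max_mem_Rset hf hne
    calc 1 = r M := by simp [hr, if_pos hM]
    _ ≤ ∑ n ∈ Finset.range N, r n :=
      Finset.single_le_sum (fun i _ => Nat.zero_le (r i))
        (Finset.mem_range.mpr (hN M (mem_Rset_pos hM).2))
  omega

lemma dB_supp_lt {N : ℕ} (hN : ∀ m, f m ≠ 0 → m < N) : ∀ m, dB f m ≠ 0 → m < N := by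
  intro m hm
  obtain ⟨h0, h1⟩ := dB_ne_zero_cases hm
  rcases h1 with h | h
  · exact hN m h
  · have := hN (m + 1) h
    omega

lemma dB_reaches_zero (hf : IsFreq f) : ∃ m, dB^[m] f = zeroF := by
  obtain ⟨N, hN⟩ := freq_bound hf
  have hN' : ∀ m, f m ≠ 0 → m < N := fun m h => by
    by_contra hc
    exact h (hN m (by omega))
  suffices H : ∀ k (g : ℕ → ℕ), IsFreq g → (∀ m, g m ≠ 0 → m < N) →
      (∑ n ∈ Finset.range N, n * g n ≤ k) → ∃ m, dB^[m] g = zeroF by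
    exact H (∑ n ∈ Finset.range N, n * f n) f hf hN' le_rfl
  intro k
  induction k with
  | zero =>
    intro g hg hgN hsum
    refine ⟨0, ?_⟩
    simp only [Function.iterate_zero, id]
    rw [zeroF_iff]
    intro n
    by_contra hc
    have h1 : 1 ≤ n := by
      rcases Nat.eq_zero_or_pos n with h0 | h0
      · exact absurd (h0 ▸ hg.1) hc
      · exact h0
    have h2 : n * g n ≤ ∑ m ∈ Finset.range N, m * g m :=
      Finset.single_le_sum (fun i _ => Nat.zero_le (i * g i))
        (Finset.mem_range.mpr (hgN n hc))
    have h3 : 1 ≤ n * g n := Nat.one_le_iff_ne_zero.2 (by positivity)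
    omega
  | succ k ih =>
    intro g hg hgN hsum
    by_cases hz : g = zeroF
    · exact ⟨0, hz⟩
    · obtain ⟨m, hm⟩ := ih (dB g) (dB_isFreq hg) (dB_supp_lt hgN)
        (by have := dB_size_lt hg hgN hz; omega)
      exact ⟨m + 1, by rwa [Function.iterate_succ_apply]⟩

lemma iterate_dB_isFreq (hf : IsFreq f) (i : ℕ) : IsFreq (dB^[i] f) := by
  induction i with
  | zero => exact hf
  | succ i ih => rw [Function.iterate_succ_apply']; exact dB_isFreq ih

lemma chainK_eq (hf : IsFreq f) : chainK f = Nat.find (dB_reaches_zero hf) := by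
  unfold chainK
  rw [dif_pos (dB_reaches_zero hf)]

lemma chainK_spec (hf : IsFreq f) : dB^[chainK f] f = zeroF := by
  rw [chainK_eq hf]
  exact Nat.find_spec (dB_reaches_zero hf)

lemma chainK_succ (hf : IsFreq f) (hne : f ≠ zeroF) : chainK f = chainK (dB f) + 1 := by
  rw [chainK_eq hf, chainK_eq (dB_isFreq hf)]
  have hA := dB_reaches_zero hf
  have hB := dB_reaches_zero (dB_isFreq hf)
  apply le_antisymm
  · exact Nat.find_min' hA (by rw [Function.iterate_succ_apply]; exact Nat.find_spec hB)
  · have h1 : Nat.find hA ≠ 0 := by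
      intro h0
      exact hne (by simpa [h0] using Nat.find_spec hA)
    obtain ⟨m', hm'⟩ := Nat.exists_eq_succ_of_ne_zero h1
    have h2 : dB^[m'] (dB f) = zeroF := by
      have := Nat.find_spec hA
      rw [hm', Function.iterate_succ_apply] at this
      exact this
    have := Nat.find_min' hB h2
    omega

lemma burgeCode_cons (hf : IsFreq f) (hne : f ≠ zeroF) :
    burgeCode f = (if 1 ∈ Rset f then true else false) :: burgeCode (dB f) := by
  rw [burgeCode, burgeCode, chainK_succ hf hne, List.range_succ_eq_map, List.map_cons,
    List.map_map]
  congr 1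

lemma code_get? (hf : IsFreq f) {j : ℕ} (h : j ≤ chainK f) :
    (burgeCode f)[j]? = some (if 1 ∈ Rset (dB^[j] f) then true else false) := by
  rw [burgeCode, List.getElem?_map, List.getElem?_range (by omega)]
  rfl

lemma code_length : (burgeCode f).length = chainK f + 1 := by
  rw [burgeCode, List.length_map, List.length_range]

lemma code_get?_some {j : ℕ} {b : Bool} (hf : IsFreq f) (h : (burgeCode f)[j]? = some b) :
    j ≤ chainK f ∧ b = (if 1 ∈ Rset (dB^[j] f) then true else false) := by
  have hlt : j < (burgeCode f).length := by
    by_contra hc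
    rw [List.getElem?_eq_none_iff.2 (by omega)] at h
    exact absurd h (by simp)
  rw [code_length] at hlt
  have hj : j ≤ chainK f := by omega
  rw [code_get? hf hj] at h
  exact ⟨hj, (Option.some_inj.1 h).symm⟩

end Burge


section SDCode
open Function
variable {f g : ℕ → ℕ}

/-- shift by `i`. -/
def shiftF (f : ℕ → ℕ) (i : ℕ) : ℕ → ℕ := fun n => if n = 0 then 0 else f (n + i)

lemma shiftF_isFreq (hf : IsFreq f) (i : ℕ) : IsFreq (shiftF f i) := by
  refine ⟨rfl, ?_⟩
  apply Set.Finite.subset (hf.2.image (· - i))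
  intro n hn
  have hn' : shiftF f i n ≠ 0 := hn
  have h0 : n ≠ 0 := by intro h; apply hn'; simp [shiftF, h]
  have h1 : f (n + i) ≠ 0 := by simpa [shiftF, h0] using hn'
  exact ⟨n + i, h1, by simp⟩

lemma sd_shift (hsd : SDz f) (i : ℕ) : SDz (shiftF f i) := by
  intro n
  rcases Nat.eq_zero_or_pos n with h0 | h0
  · subst h0; exact ⟨by simp [shiftF], Or.inl (by simp [shiftF])⟩
  · constructor
    · simp only [shiftF, if_neg (show ¬ n = 0 by omega)]
      exact (hsd (n + i)).1
    · simp only [shiftF, if_neg (show ¬ n = 0 by omega), if_neg (show ¬ n + 1 = 0 by omega)]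
      rcases (hsd (n + i)).2 with h | h
      · exact Or.inl h
      · right
        rw [show n + 1 + i = n + i + 1 by omega]
        exact h

lemma sd_dB_eq_tail (hf : IsFreq f) (hsd : SDz f) : dB f = tailF f :=
  four_imp_five (sd_imp_four hf hsd)

lemma sd_dB_iter (hf : IsFreq f) (hsd : SDz f) (i : ℕ) : dB^[i] f = shiftF f i := by
  induction i with
  | zero =>
    funext n
    simp only [Function.iterate_zero, id_eq, shiftF]
    rcases Nat.eq_zero_or_pos n with h0 | h0
    · simp [h0, hf.1]
    · rw [if_neg (show ¬ n = 0 by omega)]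
      rfl
  | succ i ih =>
    rw [Function.iterate_succ_apply', ih,
      sd_dB_eq_tail (shiftF_isFreq hf i) (sd_shift hsd i)]
    funext n
    rcases Nat.eq_zero_or_pos n with h0 | h0
    · simp [tailF, shiftF, h0]
    · simp only [tailF, shiftF, if_neg (show ¬ n = 0 by omega),
        if_neg (show ¬ n + 1 = 0 by omega)]
      congr 1
      omega

lemma sd_letter (hf : IsFreq f) (hsd : SDz f) (j : ℕ) :
    1 ∈ Rset (dB^[j] f) ↔ f (j + 1) ≠ 0 := by
  rw [sd_dB_iter hf hsd j, sd_mem_one (sd_shift hsd j)]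
  simp only [shiftF, if_neg (show ¬ (1 : ℕ) = 0 by omega)]
  rw [Nat.add_comm]

lemma sd_le_chainK (hf : IsFreq f) (hsd : SDz f) {i : ℕ} (h : f i ≠ 0) : i ≤ chainK f := by
  rw [chainK_eq hf, Nat.le_find_iff]
  intro m hm hzero
  rw [sd_dB_iter hf hsd m] at hzero
  have h2 := congrFun hzero (i - m)
  simp only [shiftF, zeroF, if_neg (show ¬ i - m = 0 by omega)] at h2
  rw [show i - m + m = i by omega] at h2
  exact h h2

lemma sd_no_bb (hf : IsFreq f) (hsd : SDz f) :
    ¬ ∃ u v, burgeCode f = u ++ [true, true] ++ v := by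
  rintro ⟨u, v, h⟩
  have h' : burgeCode f = u ++ ([true, true] ++ v) := by rw [h, List.append_assoc]
  have hget1 : (burgeCode f)[u.length]? = some true := by
    rw [h', List.getElem?_append_right le_rfl]
    simp
  have hget2 : (burgeCode f)[u.length + 1]? = some true := by
    rw [h', List.getElem?_append_right (by omega), show u.length + 1 - u.length = 1 by omega]
    simp
  have h1 := code_get?_some hf hget1
  have h2 := code_get?_some hf hget2
  have hf1 : f (u.length + 1) ≠ 0 := by
    have hb := h1.2
    by_cases hm : 1 ∈ Rset (dB^[u.length] f)
    · exact (sd_letter hf hsd u.length).1 hm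
    · rw [if_neg hm] at hb; exact absurd hb (by simp)
  have hf2 : f (u.length + 2) ≠ 0 := by
    have hb := h2.2
    by_cases hm : 1 ∈ Rset (dB^[u.length + 1] f)
    · have := (sd_letter hf hsd (u.length + 1)).1 hm
      rwa [show u.length + 1 + 1 = u.length + 2 from rfl] at this
    · rw [if_neg hm] at hb; exact absurd hb (by simp)
  rcases (hsd (u.length + 1)).2 with h'' | h''
  · exact hf1 h''
  · exact hf2 (by rwa [show u.length + 1 + 1 = u.length + 2 from rfl] at h'')

lemma sd_desFreq (hf : IsFreq f) (hsd : SDz f) : desFreq f = f := by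
  funext i
  rcases Nat.eq_zero_or_pos i with h0 | h0
  · subst h0
    have hns : (0 : ℕ) ∉ DesSet f := fun h => absurd h.1 (by omega)
    simp [desFreq, hns, hf.1]
  · by_cases hfi : f i = 0
    · have hns : i ∉ DesSet f := by
        rintro ⟨h1, h2, h3⟩
        obtain ⟨hj, hb⟩ := code_get?_some hf h2
        by_cases hm : 1 ∈ Rset (dB^[i - 1] f)
        · have := (sd_letter hf hsd (i - 1)).1 hm
          rw [show i - 1 + 1 = i by omega] at this
          exact this hfi
        · rw [if_neg hm] at hb; exact absurd hb (by simp)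
      simp [desFreq, hns, hfi]
    · have hmem : i ∈ DesSet f := by
        refine ⟨h0, ?_, ?_⟩
        · have hm : 1 ∈ Rset (dB^[i - 1] f) := by
            rw [sd_letter hf hsd (i - 1), show i - 1 + 1 = i by omega]
            exact hfi
          rw [code_get? hf (by have := sd_le_chainK hf hsd hfi; omega), if_pos hm]
        · have hm : ¬ 1 ∈ Rset (dB^[i] f) := by
            rw [sd_letter hf hsd i]
            exact fun hh => hh (((hsd i).2).resolve_left hfi)
          rw [code_get? hf (sd_le_chainK hf hsd hfi), if_neg hm]
      have h1 := (hsd i).1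
      simp only [desFreq, if_pos hmem]
      omega

lemma sd_of_dB (hf : IsFreq f) (hsd' : SDz (dB f))
    (hn : ¬ (1 ∈ Rset f ∧ 1 ∈ Rset (dB f))) : SDz f := by
  by_contra hns
  have hpair : ∀ n, f n = 0 ∨ f (n + 1) = 0 := by
    intro n
    by_contra hc
    push_neg at hc
    obtain ⟨hn0, hn1⟩ := hc
    have hn1le : 1 ≤ n := by
      rcases Nat.eq_zero_or_pos n with h0 | h0
      · exact absurd (h0 ▸ hf.1) hn0
      · exact h0
    obtain ⟨a, b, hs, ha, hb⟩ := exists_spread hf (by omega) hn1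
    have hineq : a ≤ n := by
      rcases hs.2.2.2.1 with h1 | h1
      · omega
      · by_contra hh
        have heq : a = n + 1 := by omega
        rw [heq] at h1
        simp only [Nat.add_sub_cancel] at h1
        exact hn0 h1
    have hfb1 : f (b - 1) ≠ 0 := hs.2.2.1 (b - 1) (by omega) (by omega)
    have hbR : b ∈ Rset f := ⟨a, b, hs, by omega, le_rfl, by simp⟩
    have hbnR : b - 1 ∉ Rset f := by
      intro hm
      rw [mem_Rset_iff_of_spread hs (by omega) (by omega)] at hm
      omega
    have hd : dB f (b - 1) = f (b - 1) + 1 := by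
      simp only [dB, if_neg (show ¬ b - 1 = 0 by omega), if_neg hbnR,
        if_pos (show b - 1 + 1 ∈ Rset f by rw [show b - 1 + 1 = b by omega]; exact hbR)]
      omega
    have := (hsd' (b - 1)).1
    omega
  have hviol : ∃ n, 1 < f n := by
    by_contra hc
    push_neg at hc
    exact hns (fun i => ⟨hc i, hpair i⟩)
  obtain ⟨n, hn2⟩ := hviol
  have hn0 : f n ≠ 0 := by omega
  have hn1 : 1 ≤ n := by
    rcases Nat.eq_zero_or_pos n with h0 | h0
    · exact absurd (h0 ▸ hf.1) hn0
    · exact h0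
  have hfn1 : f (n + 1) = 0 := (hpair n).resolve_left hn0
  have hfl : n = 1 ∨ f (n - 1) = 0 := by
    rcases Nat.lt_or_ge n 2 with h | h
    · left; omega
    · right
      rcases hpair (n - 1) with h' | h'
      · exact h'
      · rw [show n - 1 + 1 = n by omega] at h'
        exact absurd h' hn0
  have hsp : IsSpread f n n := spread_singleton hn1 hn0 hfl hfn1
  have hnR : n ∈ Rset f := ⟨n, n, hsp, le_rfl, le_rfl, by simp⟩
  have hn1R : n + 1 ∉ Rset f := fun h => (mem_Rset_pos h).2 hfn1
  have hdn : dB f n = f n - 1 := by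
    simp only [dB, if_neg (show ¬ n = 0 by omega), if_pos hnR, if_neg hn1R]
    omega
  have hfn2 : f n = 2 := by
    have := (hsd' n).1
    omega
  have hne1 : n = 1 := by
    by_contra hne
    have h2n : 2 ≤ n := by omega
    have hfn_1 : f (n - 1) = 0 := hfl.resolve_left hne
    have hn_1R : n - 1 ∉ Rset f := fun hm => (mem_Rset_pos hm).2 hfn_1
    have hd1 : dB f (n - 1) = 1 := by
      simp only [dB, if_neg (show ¬ n - 1 = 0 by omega), if_neg hn_1R,
        if_pos (show n - 1 + 1 ∈ Rset f by rw [show n - 1 + 1 = n by omega]; exact hnR)]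
      omega
    rcases (hsd' (n - 1)).2 with h' | h'
    · omega
    · rw [show n - 1 + 1 = n by omega] at h'
      omega
  subst hne1
  have hdB1 : dB f 1 ≠ 0 := by omega
  have h1R' : 1 ∈ Rset (dB f) := (sd_mem_one hsd').2 hdB1
  exact hn ⟨hnR, h1R'⟩

lemma no_bb_sd : ∀ K (f : ℕ → ℕ), IsFreq f → chainK f = K →
    (¬ ∃ u v, burgeCode f = u ++ [true, true] ++ v) → SDz f := by
  intro K
  induction K using Nat.strong_induction_on with
  | _ K IH =>
    intro f hf hK h3
    by_cases hz : f = zeroF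
    · subst hz
      intro i
      exact ⟨by simp [zeroF], Or.inl (by simp [zeroF])⟩
    · have hcons := burgeCode_cons hf hz
      have hIH : SDz (dB f) := by
        refine IH (chainK (dB f)) ?_ (dB f) (dB_isFreq hf) rfl ?_
        · rw [← hK, chainK_succ hf hz]; omega
        · rintro ⟨u, v, huv⟩
          exact h3 ⟨(if 1 ∈ Rset f then true else false) :: u, v, by rw [hcons, huv]; rfl⟩
      apply sd_of_dB hf hIH
      rintro ⟨h1, h2⟩
      have hdne : dB f ≠ zeroF := by
        intro he
        have h4 := (mem_Rset_pos h2).2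
        rw [he] at h4
        exact h4 rfl
      have hcons2 := burgeCode_cons (dB_isFreq hf) hdne
      exact h3 ⟨[], burgeCode (dB (dB f)), by rw [hcons, hcons2, if_pos h1, if_pos h2]; rfl⟩

end SDCode


/-- characterization of super-distinct partitions: the seven
conditions are equivalent. -/
theorem stmt14 (f : ℕ → ℕ) (hf : IsFreq f) :
    [ -- (1) P is super-distinct
      (∀ i, f i ≤ 1 ∧ (f i = 0 ∨ f (i + 1) = 0)),
      -- (2) ℓ(P) = μ₂(P)
      flen f = twoMeasure f,
      -- (3) the Burge code contains no substring bb
      ¬ ∃ u v, burgeCode f = u ++ [true, true] ++ v,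
      -- (4) f_i = 1 for i ∈ R(f) and f_i = 0 otherwise
      (∀ i, (i ∈ Rset f → f i = 1) ∧ (i ∉ Rset f → f i = 0)),
      -- (5) ∂f = (f₂, f₃, …)
      dB f = tailF f,
      -- (6) ∂P = P - 1 (in frequency representation)
      dB f = tailF f,
      -- (7) Des(P) = P
      desFreq f = f ].TFAE := by
  tfae_have 1 ↔ 2 := (two_iff_sd hf).symm
  tfae_have 1 ↔ 4 := ⟨sd_imp_four hf, four_imp_sd⟩
  tfae_have 4 → 5 := four_imp_five
  tfae_have 5 → 4 := five_imp_four hf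
  tfae_have 5 ↔ 6 := Iff.rfl
  tfae_have 1 → 3 := sd_no_bb hf
  tfae_have 3 → 1 := no_bb_sd (chainK f) f hf rfl
  tfae_have 1 → 7 := sd_desFreq hf
  tfae_have 7 → 1 := by
    intro h7
    have hval : ∀ j, f j ≤ 1 := by
      intro j
      rw [← h7]
      simp only [desFreq]
      split <;> omega
    intro i
    refine ⟨hval i, ?_⟩
    by_contra hc
    push_neg at hc
    obtain ⟨h0, h1⟩ := hc
    have hi : i ∈ DesSet f := by
      have h := congrFun h7 i
      simp only [desFreq] at h
      by_contra hmem
      rw [if_neg hmem] at h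
      exact h0 h.symm
    have hi1 : i + 1 ∈ DesSet f := by
      have h := congrFun h7 (i + 1)
      simp only [desFreq] at h
      by_contra hmem
      rw [if_neg hmem] at h
      exact h1 h.symm
    obtain ⟨_, hb2, hb3⟩ := hi
    obtain ⟨_, hb2', _⟩ := hi1
    rw [show i + 1 - 1 = i from rfl, hb3] at hb2'
    exact Bool.noConfusion (Option.some_inj.1 hb2')
  tfae_finish
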